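/- Let P be a probability measure on a measurable space X, let h, h̃ : X → ℝ be measurable functions with h ∈ L²(P), |h̃(x)| ≤ |h(x)| for all x, and h̃ bounded, and let s > 0 satisfy s·‖h̃‖_∞ ≤ 1/8. Define the tilted probability measure P_s by dP_s/dP (x) := exp(s h̃(x))/Z(s), where Z(s) := E_{X~P}[exp(s h̃(X))]. Then the chi-square divergence satisfies χ²(P_s ‖ P) = Var_{X~P}[ exp(s h̃(X))/Z(s) ] ≤ exp(4 s ‖h̃‖_∞) · s² · E_{X~P}[h(X)²] ≤ 2 s² E_{X~P}[h(X)²]. -/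

import Mathlib

open MeasureTheory ProbabilityTheory Real
open scoped ENNReal

noncomputable section

lemma variance_congr_ae {Ω : Type*} {m : MeasurableSpace Ω} {μ : Measure Ω}
    {f g : Ω → ℝ} (h : f =ᵐ[μ] g) : variance f μ = variance g μ := by
  unfold ProbabilityTheory.variance ProbabilityTheory.evariance
  rw [integral_congr_ae h]
  congr 1
  apply lintegral_congr_ae
  filter_upwards [h] with x hx
  rw [hx]

lemma abs_exp_sub_one_le' (t : ℝ) : |Real.exp t - 1| ≤ |t| * Real.exp |t| := by
  rcases le_or_gt 0 t with ht | ht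
  · rw [abs_of_nonneg ht, abs_of_nonneg (by linarith [Real.one_le_exp ht])]
    have h1 : 1 - t ≤ Real.exp (-t) := by
      have := Real.add_one_le_exp (-t); linarith
    have h2 : (1 - t) * Real.exp t ≤ Real.exp (-t) * Real.exp t :=
      mul_le_mul_of_nonneg_right h1 (Real.exp_pos t).le
    rw [← Real.exp_add, neg_add_cancel, Real.exp_zero] at h2
    nlinarith
  · rw [abs_of_neg ht, abs_of_nonpos (by linarith [Real.exp_lt_one_iff.mpr ht])]
    have h1 := Real.add_one_le_exp t
    have h2 := Real.one_le_exp (by linarith : (0:ℝ) ≤ -t)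
    nlinarith

/-- chi-square divergence bound for an exponentially tilted measure.
Here `M` plays the role of `‖h̃‖_∞`. -/
theorem chisq_tilted_bound
    {X : Type*} [MeasurableSpace X] (P : Measure X) [IsProbabilityMeasure P]
    (h htil : X → ℝ)
    (hh_meas : Measurable h) (hh_L2 : MemLp h 2 P)
    (htil_meas : Measurable htil)
    (hdom : ∀ x, |htil x| ≤ |h x|)
    (M : ℝ) (hM : ∀ x, |htil x| ≤ M)
    (s : ℝ) (hs : 0 < s) (hsM : s * M ≤ 1 / 8)
    (Z : ℝ) (hZ : Z = ∫ x, Real.exp (s * htil x) ∂P)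
    -- the tilted probability measure P_s, with density exp(s h̃)/Z w.r.t. P
    (Ps : Measure X)
    (hPs : Ps = P.withDensity fun x => ENNReal.ofReal (Real.exp (s * htil x) / Z)) :
    variance (fun x => (Ps.rnDeriv P x).toReal) P
        = variance (fun x => Real.exp (s * htil x) / Z) P
      ∧ variance (fun x => Real.exp (s * htil x) / Z) P
        ≤ Real.exp (4 * s * M) * s ^ 2 * ∫ x, (h x) ^ 2 ∂P
      ∧ Real.exp (4 * s * M) * s ^ 2 * (∫ x, (h x) ^ 2 ∂P)
        ≤ 2 * s ^ 2 * ∫ x, (h x) ^ 2 ∂P := by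
  -- basic facts
  have hXne : Nonempty X := by
    by_contra hc
    rw [not_nonempty_iff] at hc
    have h1 : P Set.univ = 1 := measure_univ
    simp [Set.univ_eq_empty_iff.mpr hc] at h1
  have hMnn : 0 ≤ M := le_trans (abs_nonneg _) (hM (Classical.arbitrary X))
  -- the density numerator
  set g : X → ℝ := fun x => Real.exp (s * htil x) with hg
  have hg_meas : Measurable g := (htil_meas.const_mul s).exp
  have hg_bdd : ∀ x, g x ∈ Set.Icc (Real.exp (-(s*M))) (Real.exp (s*M)) := by
    intro x
    have h1 : |s * htil x| ≤ s * M := by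
      rw [abs_mul, abs_of_pos hs]
      exact mul_le_mul_of_nonneg_left (hM x) hs.le
    rw [abs_le] at h1
    exact ⟨Real.exp_le_exp.mpr h1.1, Real.exp_le_exp.mpr h1.2⟩
  have hg_int : Integrable g P :=
    (memLp_of_bounded (ae_of_all _ hg_bdd) hg_meas.aestronglyMeasurable 1).integrable le_rfl
  have hZ_lb : Real.exp (-(s*M)) ≤ Z := by
    rw [hZ]
    calc Real.exp (-(s*M)) = ∫ _, Real.exp (-(s*M)) ∂P := by simp
    _ ≤ ∫ x, Real.exp (s * htil x) ∂P :=
        integral_mono (integrable_const _) hg_int (fun x => (hg_bdd x).1)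
  have hZ_pos : 0 < Z := lt_of_lt_of_le (Real.exp_pos _) hZ_lb
  have hZinv_le : 1 / Z ≤ Real.exp (s * M) := by
    rw [div_le_iff₀ hZ_pos]
    calc (1:ℝ) = Real.exp (s*M) * Real.exp (-(s*M)) := by rw [← Real.exp_add]; simp
    _ ≤ Real.exp (s*M) * Z := mul_le_mul_of_nonneg_left hZ_lb (Real.exp_pos _).le
  set f : X → ℝ := fun x => g x / Z with hf
  have hf_bdd : ∀ x, f x ∈ Set.Icc (0:ℝ) (Real.exp (s*M) / Z) := by
    intro x
    exact ⟨div_nonneg (Real.exp_pos _).le hZ_pos.le,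
      div_le_div_of_nonneg_right (hg_bdd x).2 hZ_pos.le⟩
  have hf_meas : Measurable f := hg_meas.div_const Z
  have hf_L2 : MemLp f 2 P :=
    memLp_of_bounded (ae_of_all _ hf_bdd) hf_meas.aestronglyMeasurable 2
  have hf_int : Integrable f P := hf_L2.integrable (by norm_num)
  have hf2_int : Integrable (fun x => f x ^ 2) P := hf_L2.integrable_sq
  have hh2_int : Integrable (fun x => h x ^ 2) P := hh_L2.integrable_sq
  refine ⟨?_, ?_, ?_⟩
  · -- rnDeriv identification
    apply variance_congr_ae
    have hmeas : Measurable (fun x => ENNReal.ofReal (Real.exp (s * htil x) / Z)) :=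
      (hg_meas.div_const Z).ennreal_ofReal
    have := Measure.rnDeriv_withDensity P hmeas
    rw [← hPs] at this
    filter_upwards [this] with x hx
    rw [hx, ENNReal.toReal_ofReal (div_nonneg (Real.exp_pos _).le hZ_pos.le)]
  · -- main variance bound
    set c : ℝ := 1 / Z with hc
    have hfc2_int : Integrable (fun x => (f x - c) ^ 2) P :=
      ((hf_L2.sub (memLp_const c)).integrable_sq)
    -- variance ≤ ∫ (f - c)²
    have hvar_le : variance f P ≤ ∫ x, (f x - c) ^ 2 ∂P := by
      have hexp : ∫ x, (f x - c) ^ 2 ∂P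
          = (∫ x, f x ^ 2 ∂P) - 2 * c * (∫ x, f x ∂P) + c ^ 2 := by
        have : (fun x => (f x - c) ^ 2)
            = fun x => (f x ^ 2 - 2 * c * f x) + c ^ 2 := by
          funext x; ring
        have hsub : Integrable (fun x => f x ^ 2 - 2 * c * f x) P :=
          hf2_int.sub (hf_int.const_mul (2*c))
        rw [this, integral_add hsub (integrable_const _),
          integral_sub hf2_int (hf_int.const_mul (2*c)), integral_const_mul]
        simp
      rw [variance_eq_sub hf_L2, hexp]
      have : (0:ℝ) ≤ ((∫ x, f x ∂P) - c) ^ 2 := sq_nonneg _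
      simp only [Pi.pow_apply] at *
      nlinarith [this]
    refine hvar_le.trans ?_
    -- pointwise bound
    have hpt : ∀ x, (f x - c) ^ 2 ≤ Real.exp (4 * s * M) * s ^ 2 * h x ^ 2 := by
      intro x
      have habs : |f x - c| ≤ Real.exp (2 * s * M) * (s * |h x|) := by
        have h1 : f x - c = (g x - 1) / Z := by rw [hf, hc]; ring
        have h2 : |g x - 1| ≤ |s * htil x| * Real.exp |s * htil x| :=
          abs_exp_sub_one_le' (s * htil x)
        have hstM : |s * htil x| ≤ s * M := by
          rw [abs_mul, abs_of_pos hs]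
          exact mul_le_mul_of_nonneg_left (hM x) hs.le
        have h3 : |g x - 1| ≤ s * |h x| * Real.exp (s * M) := by
          refine h2.trans ?_
          have e1 : |s * htil x| ≤ s * |h x| := by
            rw [abs_mul, abs_of_pos hs]
            exact mul_le_mul_of_nonneg_left (hdom x) hs.le
          have e2 : Real.exp |s * htil x| ≤ Real.exp (s * M) := Real.exp_le_exp.mpr hstM
          exact mul_le_mul e1 e2 (Real.exp_pos _).le
            (mul_nonneg hs.le (abs_nonneg _))
        rw [h1, abs_div, abs_of_pos hZ_pos, div_le_iff₀ hZ_pos]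
        calc |g x - 1| ≤ s * |h x| * Real.exp (s*M) := h3
        _ ≤ s * |h x| * (Real.exp (2*s*M) * Z) := by
            have hZe : Real.exp (s*M) ≤ Real.exp (2*s*M) * Z := by
              have h5 := mul_le_mul_of_nonneg_left hZ_lb (Real.exp_pos (2*s*M)).le
              rw [← Real.exp_add] at h5
              calc Real.exp (s*M) = Real.exp (2*s*M + -(s*M)) := by ring_nf
              _ ≤ Real.exp (2*s*M) * Z := h5
            exact mul_le_mul_of_nonneg_left hZe (mul_nonneg hs.le (abs_nonneg _))
        _ = Real.exp (2*s*M) * (s * |h x|) * Z := by ring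
      calc (f x - c) ^ 2 = |f x - c| ^ 2 := (sq_abs _).symm
      _ ≤ (Real.exp (2 * s * M) * (s * |h x|)) ^ 2 := by
          apply pow_le_pow_left₀ (abs_nonneg _) habs
      _ = Real.exp (4 * s * M) * s ^ 2 * h x ^ 2 := by
          rw [mul_pow, mul_pow, ← Real.exp_nat_mul, sq_abs]
          ring_nf
    calc ∫ x, (f x - c) ^ 2 ∂P ≤ ∫ x, Real.exp (4 * s * M) * s ^ 2 * h x ^ 2 ∂P :=
        integral_mono hfc2_int ((hh2_int.const_mul _)) hpt
    _ = Real.exp (4 * s * M) * s ^ 2 * ∫ x, h x ^ 2 ∂P := by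
        rw [← integral_const_mul]
  · -- exp(4sM) ≤ 2
    have h1 : Real.exp (4 * s * M) ≤ Real.exp (1/2) := by
      apply Real.exp_le_exp.mpr; linarith
    have h2 : Real.exp (1/2) ≤ 2 := by
      nlinarith [Real.exp_one_lt_d9, Real.exp_pos (1/2:ℝ),
        Real.exp_add (1/2:ℝ) (1/2:ℝ)]
    have h3 : 0 ≤ s ^ 2 * ∫ x, h x ^ 2 ∂P :=
      mul_nonneg (sq_nonneg _) (integral_nonneg fun x => sq_nonneg _)
    calc Real.exp (4 * s * M) * s ^ 2 * (∫ x, (h x) ^ 2 ∂P)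
        = Real.exp (4 * s * M) * (s ^ 2 * ∫ x, (h x) ^ 2 ∂P) := by ring
    _ ≤ 2 * (s ^ 2 * ∫ x, (h x) ^ 2 ∂P) :=
        mul_le_mul_of_nonneg_right (h1.trans h2) h3
    _ = 2 * s ^ 2 * ∫ x, (h x) ^ 2 ∂P := by ring
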